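/- Well-scaled diffusion limit in transform space: let α ∈ (0,2], β ∈ (0,1], and suppose 1 - ŵ(κ) ∼ μ|κ|^α as κ → 0 and 1 - φ̃(s) ∼ λ s^β as s → 0⁺ with μ, λ > 0. Fix κ ≠ 0 and s > 0 and, for h > 0, choose τ = τ(h) = (μ h^α / λ)^{1/β}. Then the rescaled Montroll-Weiss function p̂̃_{h,τ}(κ,s) = [(1 - φ̃(τ s))/s] · 1/(1 - ŵ(hκ) φ̃(τ s)) converges, as h → 0⁺, to s^{β-1}/(|κ|^α + s^β). -/

import Mathlib

open Real Filter Set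

/-- Well-scaled passage to the diffusion limit in the Fourier-Laplace domain:
under the scaling relation `τ = (μ h^α / λ)^{1/β}` the rescaled Montroll-Weiss
function tends to `s^{β-1}/(|κ|^α + s^β)` as `h → 0⁺`. -/
theorem well_scaled_diffusion_limit (α β μ lam : ℝ)
    (hα : α ∈ Set.Ioc (0:ℝ) 2) (hβ : β ∈ Set.Ioc (0:ℝ) 1)
    (hμ : 0 < μ) (hlam : 0 < lam)
    (wh : ℝ → ℝ) (φt : ℝ → ℝ)
    (hw_bd : ∀ κ, |wh κ| ≤ 1) (hw0 : wh 0 = 1)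
    (hφ_bd : ∀ s > (0:ℝ), 0 < φt s ∧ φt s < 1)
    (hw_asymp : Tendsto (fun κ : ℝ => (1 - wh κ) / (μ * |κ| ^ α))
      (nhdsWithin 0 {0}ᶜ) (nhds 1))
    (hφ_asymp : Tendsto (fun s : ℝ => (1 - φt s) / (lam * s ^ β))
      (nhdsWithin 0 (Set.Ioi 0)) (nhds 1))
    (κ : ℝ) (hκ : κ ≠ 0) (s : ℝ) (hs : 0 < s)
    (τ : ℝ → ℝ) (hτ : ∀ h : ℝ, τ h = (μ * h ^ α / lam) ^ (1 / β)) :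
    Tendsto
      (fun h : ℝ =>
        ((1 - φt (τ h * s)) / s) * (1 / (1 - wh (h * κ) * φt (τ h * s))))
      (nhdsWithin 0 (Set.Ioi 0))
      (nhds (s ^ (β - 1) / (|κ| ^ α + s ^ β))) := by
  obtain ⟨hα0, hα2⟩ := hα
  obtain ⟨hβ0, hβ1⟩ := hβ
  have hβne : β ≠ 0 := hβ0.ne'
  -- positivity of τ h for h > 0
  have hτpos : ∀ h : ℝ, 0 < h → 0 < τ h := by
    intro h hh
    rw [hτ h]
    have : 0 < μ * h ^ α / lam := by positivity
    exact Real.rpow_pos_of_pos this _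
  -- τ h * s → 0 within Ioi 0
  have hτs : Tendsto (fun h : ℝ => τ h * s) (nhdsWithin 0 (Set.Ioi 0))
      (nhdsWithin 0 (Set.Ioi 0)) := by
    rw [tendsto_nhdsWithin_iff]
    constructor
    · have hc1 : ContinuousAt (fun h : ℝ => h ^ α) 0 :=
        Real.continuousAt_rpow_const 0 α (Or.inr hα0.le)
      have hc2 : ContinuousAt (fun x : ℝ => x ^ (1/β)) 0 :=
        Real.continuousAt_rpow_const 0 (1/β) (Or.inr (by positivity))
      have hc3 : ContinuousAt (fun h : ℝ => μ * h ^ α / lam) 0 :=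
        (continuousAt_const.mul hc1).div_const lam
      have hc4 : ContinuousAt (fun h : ℝ => (μ * h ^ α / lam) ^ (1/β) * s) 0 := by
        have h0 : (μ * (0:ℝ) ^ α / lam) = 0 := by
          rw [Real.zero_rpow hα0.ne']; ring
        have hc5 : ContinuousAt (fun h : ℝ => (μ * h ^ α / lam) ^ (1/β)) 0 := by
          apply ContinuousAt.comp (g := fun x : ℝ => x ^ (1/β)) (f := fun h : ℝ => μ * h ^ α / lam)
          · show ContinuousAt _ (μ * (0:ℝ) ^ α / lam)
            rw [h0]; exact hc2
          · exact hc3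
        exact hc5.mul continuousAt_const
      have := hc4.tendsto
      have hval : (μ * (0:ℝ) ^ α / lam) ^ (1/β) * s = 0 := by
        rw [Real.zero_rpow hα0.ne', mul_zero, zero_div,
          Real.zero_rpow (by positivity : (1:ℝ)/β ≠ 0), zero_mul]
      rw [hval] at this
      have h2 := this.mono_left (nhdsWithin_le_nhds (s := Set.Ioi 0))
      convert h2 using 2 <;> simp [hτ]
    · filter_upwards [self_mem_nhdsWithin] with h hh
      exact mul_pos (hτpos h hh) hs
  -- key identity : lam * (τ h * s)^β = μ * h^α * s^β for h > 0
  have hkey : ∀ h : ℝ, 0 < h → lam * (τ h * s) ^ β = μ * h ^ α * s ^ β := by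
    intro h hh
    have hτh := (hτpos h hh).le
    rw [Real.mul_rpow hτh hs.le, hτ h,
      ← Real.rpow_mul (by positivity : (0:ℝ) ≤ μ * h ^ α / lam),
      one_div_mul_cancel hβne, Real.rpow_one]
    field_simp
  -- limit of F h = (1 - φt (τ h * s)) / (μ * h^α)
  have hF : Tendsto (fun h : ℝ => (1 - φt (τ h * s)) / (μ * h ^ α))
      (nhdsWithin 0 (Set.Ioi 0)) (nhds (s ^ β)) := by
    have hcomp := hφ_asymp.comp hτs
    have := hcomp.mul_const (s ^ β)
    rw [one_mul] at this
    refine this.congr' ?_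
    filter_upwards [self_mem_nhdsWithin] with h hh
    have hh' : (0:ℝ) < h := hh
    have hk := hkey h hh'
    have hc : μ * h ^ α ≠ 0 := by positivity
    have hsβ : (s:ℝ) ^ β ≠ 0 := by positivity
    simp only [Function.comp]
    rw [hk]
    field_simp
  -- limit of G h = (1 - wh (h * κ)) / (μ * h^α)
  have hhκ : Tendsto (fun h : ℝ => h * κ) (nhdsWithin 0 (Set.Ioi 0))
      (nhdsWithin 0 {0}ᶜ) := by
    rw [tendsto_nhdsWithin_iff]
    constructor
    · have : Tendsto (fun h : ℝ => h * κ) (nhds 0) (nhds (0 * κ)) :=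
        (continuous_id.mul continuous_const).tendsto 0
      rw [zero_mul] at this
      exact this.mono_left nhdsWithin_le_nhds
    · filter_upwards [self_mem_nhdsWithin] with h hh
      exact mul_ne_zero (ne_of_gt hh) hκ
  have habs : ∀ h : ℝ, 0 < h → μ * |h * κ| ^ α = μ * h ^ α * |κ| ^ α := by
    intro h hh
    rw [abs_mul, abs_of_pos hh, Real.mul_rpow hh.le (abs_nonneg κ)]
    ring
  have hG : Tendsto (fun h : ℝ => (1 - wh (h * κ)) / (μ * h ^ α))
      (nhdsWithin 0 (Set.Ioi 0)) (nhds (|κ| ^ α)) := by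
    have hcomp := hw_asymp.comp hhκ
    have := hcomp.mul_const (|κ| ^ α)
    rw [one_mul] at this
    refine this.congr' ?_
    filter_upwards [self_mem_nhdsWithin] with h hh
    have hh' : (0:ℝ) < h := hh
    have hc : μ * h ^ α ≠ 0 := by positivity
    have hκα : (|κ|:ℝ) ^ α ≠ 0 := by positivity
    simp only [Function.comp]
    rw [habs h hh']
    field_simp
  -- limit of wh (h * κ)
  have hwlim : Tendsto (fun h : ℝ => wh (h * κ)) (nhdsWithin 0 (Set.Ioi 0))
      (nhds 1) := by
    have hμh : Tendsto (fun h : ℝ => μ * h ^ α) (nhdsWithin 0 (Set.Ioi 0)) (nhds 0) := by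
      have hc1 : ContinuousAt (fun h : ℝ => μ * h ^ α) 0 :=
        continuousAt_const.mul (Real.continuousAt_rpow_const 0 α (Or.inr hα0.le))
      have := hc1.tendsto.mono_left (nhdsWithin_le_nhds (s := Set.Ioi 0))
      simpa [Real.zero_rpow hα0.ne'] using this
    have h1 : Tendsto (fun h : ℝ => (1 - wh (h * κ)) / (μ * h ^ α) * (μ * h ^ α))
        (nhdsWithin 0 (Set.Ioi 0)) (nhds (|κ| ^ α * 0)) := hG.mul hμh
    rw [mul_zero] at h1
    have h2 : Tendsto (fun h : ℝ => 1 - wh (h * κ)) (nhdsWithin 0 (Set.Ioi 0))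
        (nhds 0) := by
      refine h1.congr' ?_
      filter_upwards [self_mem_nhdsWithin] with h hh
      have hh' : (0:ℝ) < h := hh
      have hc : μ * h ^ α ≠ 0 := by positivity
      field_simp
    have h3 := (tendsto_const_nhds (x := (1:ℝ))).sub h2
    simpa using h3
  -- combine
  have hden_ne : s * (|κ| ^ α + s ^ β) ≠ 0 := by
    have : (0:ℝ) < |κ| ^ α := Real.rpow_pos_of_pos (abs_pos.mpr hκ) α
    positivity
  have hmain : Tendsto (fun h : ℝ =>
      ((1 - φt (τ h * s)) / (μ * h ^ α)) /
        (s * ((1 - wh (h * κ)) / (μ * h ^ α) +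
          wh (h * κ) * ((1 - φt (τ h * s)) / (μ * h ^ α)))))
      (nhdsWithin 0 (Set.Ioi 0))
      (nhds (s ^ β / (s * (|κ| ^ α + 1 * s ^ β)))) := by
    exact hF.div ((tendsto_const_nhds).mul (hG.add (hwlim.mul hF)))
      (by rw [one_mul]; exact hden_ne)
  have htarget : s ^ β / (s * (|κ| ^ α + 1 * s ^ β)) = s ^ (β - 1) / (|κ| ^ α + s ^ β) := by
    rw [one_mul, Real.rpow_sub hs, Real.rpow_one]
    have : (0:ℝ) < |κ| ^ α := Real.rpow_pos_of_pos (abs_pos.mpr hκ) α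
    field_simp
  rw [htarget] at hmain
  refine hmain.congr' ?_
  filter_upwards [self_mem_nhdsWithin] with h hh
  have hh' : (0:ℝ) < h := hh
  set A := 1 - φt (τ h * s) with hA
  set w := wh (h * κ) with hw
  have hc : μ * h ^ α ≠ 0 := by positivity
  have hB : (1 - w) / (μ * h ^ α) + w * (A / (μ * h ^ α)) = (1 - w * φt (τ h * s)) / (μ * h ^ α) := by
    rw [hA]
    field_simp
    ring
  rw [hB]
  set B := 1 - w * φt (τ h * s) with hBdef
  by_cases hB0 : B = 0
  · simp [hB0]
  · field_simp
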